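/- If (M,d) is a compact metric space and a sequence of Borel probability measures P_k converges weakly to Q, then the p-centrality functions σ_{P_k,p} converge uniformly to σ_{Q,p}. -/
import Mathlib

open MeasureTheory Real

/-- The `p`-centrality function of a measure. -/
noncomputable def pCentrality {M : Type*} [PseudoMetricSpace M] [MeasurableSpace M]
    (P : Measure M) (p : ℝ) (x : M) : ℝ :=
  (∫ y, dist x y ^ p ∂P) ^ (1 / p)

/-- The `p`-Wasserstein distance, as an infimum over couplings. -/
noncomputable def wassersteinDist {M : Type*} [PseudoMetricSpace M] [MeasurableSpace M]
    (p : ℝ) (P Q : Measure M) : ℝ :=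
  sInf { r : ℝ | ∃ γ : Measure (M × M), γ.map Prod.fst = P ∧ γ.map Prod.snd = Q ∧
      r = (∫ z, dist z.1 z.2 ^ p ∂γ) ^ (1 / p) }

/-- The maximal `p`-centrality discrepancy with `n`-dimensional critic output. -/
noncomputable def maxPCentralityDiscrepancy {M : Type*} [PseudoMetricSpace M]
    [MeasurableSpace M] (p : ℝ) (n : ℕ) (K : NNReal) (P Q : Measure M) : ℝ :=
  ⨆ f : {f : M → EuclideanSpace ℝ (Fin n) // LipschitzWith K f},
    (∫ y, ‖f.1 y‖ ^ p ∂P) ^ (1 / p) - (∫ y, ‖f.1 y‖ ^ p ∂Q) ^ (1 / p)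

section Aux

variable {M : Type*} [MetricSpace M] [MeasurableSpace M] [BorelSpace M] [CompactSpace M]

/-- Rewrite `pCentrality` via a lower integral. -/
lemma pCentrality_eq_lintegral (P : Measure M) [IsProbabilityMeasure P] {p : ℝ} (hp : 1 ≤ p)
    (x : M) :
    pCentrality P p x =
      ((∫⁻ y, ENNReal.ofReal (dist x y) ^ p ∂P) ^ (1 / p)).toReal := by
  have hp0 : 0 < p := lt_of_lt_of_le one_pos hp
  have hmeas : AEStronglyMeasurable (fun y => dist x y ^ p) P :=
    ((continuous_const.dist continuous_id).rpow_const
      (fun y => Or.inr hp0.le)).aestronglyMeasurable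
  rw [pCentrality, integral_eq_lintegral_of_nonneg_ae
      (Filter.Eventually.of_forall fun y => rpow_nonneg dist_nonneg p) hmeas,
    ← ENNReal.toReal_rpow]
  congr 2
  refine lintegral_congr fun y => ?_
  rw [← ENNReal.ofReal_rpow_of_nonneg dist_nonneg hp0.le]

lemma lintegral_dist_rpow_ne_top (P : Measure M) [IsProbabilityMeasure P] {p : ℝ}
    (hp : 0 ≤ p) (x : M) :
    (∫⁻ y, ENNReal.ofReal (dist x y) ^ p ∂P) ≠ ⊤ := by
  set C := Metric.diam (Set.univ : Set M)
  have hC : ∀ y : M, dist x y ≤ C := fun y =>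
    Metric.dist_le_diam_of_mem Metric.isBounded_of_compactSpace trivial trivial
  have hbound : ∀ y, ENNReal.ofReal (dist x y) ^ p ≤ ENNReal.ofReal C ^ p := fun y =>
    ENNReal.rpow_le_rpow (ENNReal.ofReal_le_ofReal (hC y)) hp
  have : (∫⁻ y, ENNReal.ofReal (dist x y) ^ p ∂P) ≤ ENNReal.ofReal C ^ p * P Set.univ := by
    rw [← lintegral_const]
    exact lintegral_mono hbound
  refine ne_top_of_le_ne_top ?_ this
  rw [measure_univ, mul_one]
  exact ENNReal.rpow_ne_top_of_nonneg hp ENNReal.ofReal_ne_top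

/-- `pCentrality` is 1-Lipschitz. -/
lemma lipschitz_pCentrality (P : Measure M) [IsProbabilityMeasure P] {p : ℝ} (hp : 1 ≤ p) :
    LipschitzWith 1 (pCentrality P p) := by
  have hp0 : 0 < p := lt_of_lt_of_le one_pos hp
  refine LipschitzWith.of_le_add fun x x' => ?_
  rw [pCentrality_eq_lintegral P hp x, pCentrality_eq_lintegral P hp x']
  have hmeas : ∀ z : M, AEMeasurable (fun y => ENNReal.ofReal (dist z y)) P := fun z =>
    (ENNReal.continuous_ofReal.comp (continuous_const.dist continuous_id)).aemeasurable
  have key : (∫⁻ y, ENNReal.ofReal (dist x y) ^ p ∂P) ^ (1 / p) ≤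
      (∫⁻ y, (fun _ => ENNReal.ofReal (dist x x')) y ^ p ∂P) ^ (1 / p) +
      (∫⁻ y, ENNReal.ofReal (dist x' y) ^ p ∂P) ^ (1 / p) := by
    refine le_trans ?_ (ENNReal.lintegral_Lp_add_le aemeasurable_const (hmeas x') hp)
    refine ENNReal.rpow_le_rpow (lintegral_mono fun y => ?_) (by positivity)
    refine ENNReal.rpow_le_rpow ?_ hp0.le
    simp only [Pi.add_apply]
    rw [← ENNReal.ofReal_add dist_nonneg dist_nonneg]
    exact ENNReal.ofReal_le_ofReal (dist_triangle x x' y)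
  have hconst : (∫⁻ _ : M, ENNReal.ofReal (dist x x') ^ p ∂P) ^ (1 / p)
      = ENNReal.ofReal (dist x x') := by
    rw [lintegral_const]
    simp [← ENNReal.rpow_natCast, ← ENNReal.rpow_mul, mul_one_div, div_self hp0.ne', mul_inv_cancel₀ hp0.ne', ENNReal.rpow_one]
  rw [hconst] at key
  have h1 : (∫⁻ y, ENNReal.ofReal (dist x y) ^ p ∂P) ^ (1 / p) ≠ ⊤ :=
    ENNReal.rpow_ne_top_of_nonneg (by positivity) (lintegral_dist_rpow_ne_top P hp0.le x)
  have h2 : (∫⁻ y, ENNReal.ofReal (dist x' y) ^ p ∂P) ^ (1 / p) ≠ ⊤ :=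
    ENNReal.rpow_ne_top_of_nonneg (by positivity) (lintegral_dist_rpow_ne_top P hp0.le x')
  calc ((∫⁻ y, ENNReal.ofReal (dist x y) ^ p ∂P) ^ (1 / p)).toReal
      ≤ (ENNReal.ofReal (dist x x') + (∫⁻ y, ENNReal.ofReal (dist x' y) ^ p ∂P) ^ (1 / p)).toReal :=
        ENNReal.toReal_mono (by finiteness) key
    _ = ((∫⁻ y, ENNReal.ofReal (dist x' y) ^ p ∂P) ^ (1 / p)).toReal + dist x x' := by
        rw [ENNReal.toReal_add (by finiteness) h2, ENNReal.toReal_ofReal dist_nonneg, add_comm]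

end Aux

theorem pCentrality_tendstoUniformly_of_weak_convergence {M : Type*} [MetricSpace M]
    [MeasurableSpace M] [BorelSpace M] [CompactSpace M] (p : ℝ) (hp : 1 ≤ p)
    (P : ℕ → ProbabilityMeasure M) (Q : ProbabilityMeasure M)
    (h : Filter.Tendsto P Filter.atTop (nhds Q)) :
    TendstoUniformly (fun k x => pCentrality (P k : Measure M) p x)
      (pCentrality (Q : Measure M) p) Filter.atTop := by
  have hp0 : 0 < p := lt_of_lt_of_le one_pos hp
  -- pointwise convergence
  have hpt : ∀ x : M, Filter.Tendsto (fun k => pCentrality (P k : Measure M) p x)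
      Filter.atTop (nhds (pCentrality (Q : Measure M) p x)) := by
    intro x
    have hcont : Continuous fun y : M => dist x y ^ p :=
      (continuous_const.dist continuous_id).rpow_const fun y => Or.inr hp0.le
    set f : BoundedContinuousFunction M ℝ :=
      BoundedContinuousFunction.mkOfCompact ⟨_, hcont⟩ with hf
    have := MeasureTheory.ProbabilityMeasure.tendsto_iff_forall_integral_tendsto.mp h f
    simp only [hf, BoundedContinuousFunction.mkOfCompact_apply, ContinuousMap.coe_mk] at this
    exact (this.rpow_const (Or.inr (by positivity)))
  -- equicontinuity
  have heq : Equicontinuous (fun k x => pCentrality (P k : Measure M) p x) := by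
    refine Metric.equicontinuous_of_continuity_modulus id (by simpa using Filter.tendsto_id) _ ?_
    intro x y k
    simpa using (lipschitz_pCentrality (P k : Measure M) hp).dist_le_mul x y
  exact UniformFun.tendsto_iff_tendstoUniformly.mp
    ((heq.tendsto_uniformFun_iff_pi Filter.atTop _).mpr (tendsto_pi_nhds.mpr hpt))
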